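/- Let (c(t))_{t∈ℝ} be a complex-valued cosine function such that limsup_{t→0} |c(t) − 1| = 0. Then c is continuous on ℝ and there exists a ∈ ℂ such that c(t) = cos(t a) for all t ∈ ℝ. -/

import Mathlib

open Filter Topology
open scoped ENNReal NNReal

/-- A complex-valued cosine function: `c 0 = 1` and
`c (s+t) + c (s-t) = 2 * c s * c t` for all real `s, t`. -/
def IsScalarCosineFunction (c : ℝ → ℂ) : Prop :=
  c 0 = 1 ∧ ∀ s t : ℝ, c (s + t) + c (s - t) = 2 * c s * c t

namespace ScalarCosineAux

/-- A global "arccos": for every `z`, `cos (acos z) = z`, and `acos` tends to `0` at `1`. -/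
noncomputable def acos (z : ℂ) : ℂ :=
  -Complex.I * Complex.log (z + (z ^ 2 - 1) ^ ((1 : ℂ) / 2))

lemma sq_sqrtaux (z : ℂ) : ((z ^ 2 - 1) ^ ((1 : ℂ) / 2)) ^ 2 = z ^ 2 - 1 := by
  by_cases hz : z ^ 2 - 1 = 0
  · rw [hz, Complex.zero_cpow (by norm_num : (1 : ℂ) / 2 ≠ 0)]
    simp
  · rw [sq, ← Complex.cpow_add _ _ hz]
    norm_num

lemma q_mul (z : ℂ) :
    (z + (z ^ 2 - 1) ^ ((1 : ℂ) / 2)) * (z - (z ^ 2 - 1) ^ ((1 : ℂ) / 2)) = 1 := by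
  have h := sq_sqrtaux z
  linear_combination -h

lemma q_ne_zero (z : ℂ) : z + (z ^ 2 - 1) ^ ((1 : ℂ) / 2) ≠ 0 := by
  intro h
  have h2 := q_mul z
  rw [h, zero_mul] at h2
  exact one_ne_zero h2.symm

lemma cos_acos (z : ℂ) : Complex.cos (acos z) = z := by
  set u := (z ^ 2 - 1) ^ ((1 : ℂ) / 2) with hu
  have hq : z + u ≠ 0 := q_ne_zero z
  have e1 : acos z * Complex.I = Complex.log (z + u) := by
    show -Complex.I * Complex.log (z + u) * Complex.I = Complex.log (z + u)
    linear_combination (-(Complex.log (z + u))) * Complex.I_mul_I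
  have e2 : -acos z * Complex.I = -Complex.log (z + u) := by
    show -(-Complex.I * Complex.log (z + u)) * Complex.I = -Complex.log (z + u)
    linear_combination (Complex.log (z + u)) * Complex.I_mul_I
  have h2 := Complex.two_cos (acos z)
  rw [e1, e2, Complex.exp_neg, Complex.exp_log hq] at h2
  have hinv : (z + u)⁻¹ = z - u := inv_eq_of_mul_eq_one_right (q_mul z)
  rw [hinv] at h2
  have h3 : 2 * Complex.cos (acos z) = 2 * z := by rw [h2]; ring
  have := mul_left_cancel₀ (two_ne_zero' ℂ) h3
  exact this

lemma tendsto_acos : Tendsto acos (𝓝 1) (𝓝 0) := by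
  have hu : Tendsto (fun z : ℂ => (z ^ 2 - 1) ^ ((1 : ℂ) / 2)) (𝓝 1) (𝓝 0) := by
    rw [tendsto_zero_iff_norm_tendsto_zero]
    have hb : ∀ z : ℂ, ‖(z ^ 2 - 1) ^ ((1 : ℂ) / 2)‖ ≤ ‖z ^ 2 - 1‖ ^ ((1 : ℝ) / 2) := by
      intro z
      have h := Complex.norm_cpow_le (z ^ 2 - 1) ((1 : ℂ) / 2)
      simpa using h
    have ht : Tendsto (fun z : ℂ => ‖z ^ 2 - 1‖ ^ ((1 : ℝ) / 2)) (𝓝 1) (𝓝 0) := by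
      have h1 : Tendsto (fun z : ℂ => ‖z ^ 2 - 1‖) (𝓝 1) (𝓝 0) := by
        have : Continuous fun z : ℂ => ‖z ^ 2 - 1‖ := by fun_prop
        have h2 := this.tendsto 1
        norm_num at h2
        exact h2
      have h3 : ContinuousAt (fun x : ℝ => x ^ ((1 : ℝ) / 2)) 0 :=
        Real.continuousAt_rpow_const 0 ((1 : ℝ) / 2) (Or.inr (by norm_num))
      have h4 := h3.tendsto.comp h1
      simpa [Real.zero_rpow (by norm_num : ((1 : ℝ) / 2) ≠ 0), Function.comp_def] using h4
    exact squeeze_zero (fun z => norm_nonneg _) hb ht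
  have hq : Tendsto (fun z : ℂ => z + (z ^ 2 - 1) ^ ((1 : ℂ) / 2)) (𝓝 1) (𝓝 1) := by
    have h := (tendsto_id.add hu)
    simpa using h
  have hl : Tendsto (fun z : ℂ => Complex.log (z + (z ^ 2 - 1) ^ ((1 : ℂ) / 2))) (𝓝 1) (𝓝 0) := by
    have hc : ContinuousAt Complex.log 1 := continuousAt_clog (by simp)
    have := hc.tendsto.comp hq
    simpa [Complex.log_one, Function.comp_def] using this
  rw [show acos = fun z : ℂ => -Complex.I * Complex.log (z + (z ^ 2 - 1) ^ ((1 : ℂ) / 2)) from rfl]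
  have h2 := hl.const_mul (-Complex.I)
  rw [mul_zero] at h2
  exact h2

variable {c : ℝ → ℂ}

lemma even_c (hc : IsScalarCosineFunction c) (t : ℝ) : c (-t) = c t := by
  have h := hc.2 0 t
  rw [zero_add, zero_sub, hc.1] at h
  linear_combination h

lemma double (hc : IsScalarCosineFunction c) (t : ℝ) : c (2 * t) = 2 * c t ^ 2 - 1 := by
  have h := hc.2 t t
  rw [show t + t = 2 * t by ring, sub_self, hc.1] at h
  linear_combination h

lemma prodid (hc : IsScalarCosineFunction c) (x y : ℝ) :
    c (x + y) * c (x - y) = c x ^ 2 + c y ^ 2 - 1 := by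
  have h1 := hc.2 (x + y) (x - y)
  rw [show x + y + (x - y) = 2 * x by ring, show x + y - (x - y) = 2 * y by ring,
    double hc, double hc] at h1
  linear_combination -h1 / 2

lemma norm_ineq (u v : ℂ) : ‖u‖ ≤ ‖u + v‖ + Real.sqrt ‖u * v‖ := by
  have h1 : ‖u‖ ^ 2 ≤ ‖u‖ * ‖u + v‖ + ‖u * v‖ := by
    have e : ‖u‖ ^ 2 = ‖u * (u + v) - u * v‖ := by
      rw [show u * (u + v) - u * v = u ^ 2 by ring, norm_pow]
    rw [e]
    calc ‖u * (u + v) - u * v‖ ≤ ‖u * (u + v)‖ + ‖u * v‖ := norm_sub_le _ _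
      _ = ‖u‖ * ‖u + v‖ + ‖u * v‖ := by rw [norm_mul]
  have hs : Real.sqrt ‖u * v‖ ^ 2 = ‖u * v‖ := Real.sq_sqrt (norm_nonneg _)
  nlinarith [norm_nonneg (u + v), norm_nonneg u, Real.sqrt_nonneg ‖u * v‖,
    sq_nonneg (‖u‖ - Real.sqrt ‖u * v‖)]

lemma cont_of (hc : IsScalarCosineFunction c) (h0 : Tendsto c (𝓝 0) (𝓝 1)) :
    Continuous c := by
  rw [continuous_iff_continuousAt]
  intro s
  have key : ∀ t : ℝ, ‖c (s + t) - c s‖ ≤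
      ‖2 * c s * (c t - 1)‖ + Real.sqrt ‖(1 - c t) * (2 * c s ^ 2 - c t - 1)‖ := by
    intro t
    have e1 : (c (s + t) - c s) + (c (s - t) - c s) = 2 * c s * (c t - 1) := by
      linear_combination hc.2 s t
    have e2 : (c (s + t) - c s) * (c (s - t) - c s) = (1 - c t) * (2 * c s ^ 2 - c t - 1) := by
      linear_combination prodid hc s t - c s * hc.2 s t
    calc ‖c (s + t) - c s‖
        ≤ ‖(c (s + t) - c s) + (c (s - t) - c s)‖
          + Real.sqrt ‖(c (s + t) - c s) * (c (s - t) - c s)‖ := norm_ineq _ _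
      _ = _ := by rw [e1, e2]
  have hb : Tendsto (fun t : ℝ => ‖2 * c s * (c t - 1)‖
      + Real.sqrt ‖(1 - c t) * (2 * c s ^ 2 - c t - 1)‖) (𝓝 0) (𝓝 0) := by
    have hG : Tendsto (fun z : ℂ => ‖2 * c s * (z - 1)‖
        + Real.sqrt ‖(1 - z) * (2 * c s ^ 2 - z - 1)‖) (𝓝 1) (𝓝 0) := by
      have hcont : Continuous (fun z : ℂ => ‖2 * c s * (z - 1)‖
          + Real.sqrt ‖(1 - z) * (2 * c s ^ 2 - z - 1)‖) := by fun_prop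
      have h1 := hcont.tendsto 1
      norm_num at h1
      convert h1 using 2
      norm_num
    exact hG.comp h0
  have hdiff : Tendsto (fun t : ℝ => c (s + t) - c s) (𝓝 0) (𝓝 0) := by
    rw [tendsto_zero_iff_norm_tendsto_zero]
    exact squeeze_zero (fun t => norm_nonneg _) key hb
  have h1 : Tendsto (fun t : ℝ => c (s + t)) (𝓝 0) (𝓝 (c s)) := by
    have := hdiff.add_const (c s)
    simpa using this
  have hmap : Tendsto (fun x : ℝ => x - s) (𝓝 s) (𝓝 0) := by
    have := (continuous_id.sub (continuous_const (y := s))).tendsto s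
    simpa [Pi.sub_def] using this
  have h2 := h1.comp hmap
  have h3 : ∀ x : ℝ, ((fun t : ℝ => c (s + t)) ∘ fun x : ℝ => x - s) x = c x := by
    intro x
    simp only [Function.comp]
    rw [show s + (x - s) = x by ring]
  exact Tendsto.congr h3 h2

lemma cheb_nat (hc : IsScalarCosineFunction c) {h : ℝ} {w : ℂ}
    (hw : c h = Complex.cos w) : ∀ n : ℕ, c (n * h) = Complex.cos (n * w) := by
  have key : ∀ n : ℕ, c (n * h) = Complex.cos (n * w) ∧
      c ((n + 1 : ℕ) * h) = Complex.cos ((n + 1 : ℕ) * w) := by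
    intro n
    induction n with
    | zero =>
      constructor
      · simp [hc.1]
      · push_cast
        simpa using hw
    | succ n ih =>
      refine ⟨ih.2, ?_⟩
      have e1 := hc.2 (((n : ℝ) + 1) * h) h
      have e2 : Complex.cos (((n : ℂ) + 1) * w + w) + Complex.cos (((n : ℂ) + 1) * w - w)
          = 2 * Complex.cos (((n : ℂ) + 1) * w) * Complex.cos w := by
        rw [Complex.cos_add, Complex.cos_sub]; ring
      rw [show ((n : ℝ) + 1) * h + h = ((n : ℝ) + 1 + 1) * h by ring,
        show ((n : ℝ) + 1) * h - h = (n : ℝ) * h by ring] at e1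
      rw [show ((n : ℂ) + 1) * w + w = ((n : ℂ) + 1 + 1) * w by ring,
        show ((n : ℂ) + 1) * w - w = (n : ℂ) * w by ring] at e2
      have i1 : c ((n : ℝ) * h) = Complex.cos ((n : ℂ) * w) := ih.1
      have i2 : c (((n : ℝ) + 1) * h) = Complex.cos (((n : ℂ) + 1) * w) := by
        have := ih.2; push_cast at this; exact this
      push_cast
      rw [i1, i2, hw] at e1
      linear_combination e1 - e2
  exact fun n => (key n).1

lemma cheb_int (hc : IsScalarCosineFunction c) {h : ℝ} {w : ℂ}
    (hw : c h = Complex.cos w) (n : ℤ) : c (n * h) = Complex.cos (n * w) := by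
  rcases le_or_gt 0 n with hn | hn
  · obtain ⟨m, rfl⟩ := Int.eq_ofNat_of_zero_le hn
    exact_mod_cast cheb_nat hc hw m
  · obtain ⟨m, hm⟩ := Int.eq_ofNat_of_zero_le (by linarith : (0 : ℤ) ≤ -n)
    have hn' : n = -(m : ℤ) := by linarith
    have e1 : ((n : ℤ) : ℝ) * h = -((m : ℝ) * h) := by rw [hn']; push_cast; ring
    have e2 : ((n : ℤ) : ℂ) * w = -((m : ℂ) * w) := by rw [hn']; push_cast; ring
    rw [e1, even_c hc, cheb_nat hc hw m, e2, Complex.cos_neg]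

end ScalarCosineAux

open ScalarCosineAux in
/-- A scalar cosine function with `limsup_{t→0} |c(t) - 1| = 0` is continuous
and of the form `c(t) = cos (t a)` for some complex `a`. -/
theorem scalar_cosine_continuous (c : ℝ → ℂ) (hc : IsScalarCosineFunction c)
    (h : Filter.limsup (fun t : ℝ => (‖c t - 1‖₊ : ℝ≥0∞)) (𝓝[≠] 0) = 0) :
    Continuous c ∧ ∃ a : ℂ, ∀ t : ℝ, c t = Complex.cos (t * a) := by
  -- Step 1 : continuity at 0
  have h0 : Tendsto c (𝓝 0) (𝓝 1) := by
    have h1 : Tendsto (fun t : ℝ => (‖c t - 1‖₊ : ℝ≥0∞)) (𝓝[≠] (0 : ℝ)) (𝓝 0) := by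
      rw [ENNReal.tendsto_nhds_zero]
      intro ε hε
      have h2 : limsup (fun t : ℝ => (‖c t - 1‖₊ : ℝ≥0∞)) (𝓝[≠] (0 : ℝ)) < ε := by
        rw [h]; exact hε
      exact (Filter.eventually_lt_of_limsup_lt h2).mono fun x hx => hx.le
    have h2 : Tendsto (fun t : ℝ => (‖c t - 1‖₊ : ℝ≥0∞)) (𝓝 (0 : ℝ)) (𝓝 0) := by
      rw [← nhdsNE_sup_pure (0 : ℝ), tendsto_sup]
      refine ⟨h1, ?_⟩
      have := tendsto_pure_nhds (fun t : ℝ => (‖c t - 1‖₊ : ℝ≥0∞)) 0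
      simpa [hc.1] using this
    have h3 : Tendsto (fun t : ℝ => ‖c t - 1‖₊) (𝓝 (0 : ℝ)) (𝓝 0) := by
      rw [← ENNReal.coe_zero, ENNReal.tendsto_coe] at h2
      exact h2
    have h4 : Tendsto (fun t : ℝ => ‖c t - 1‖) (𝓝 (0 : ℝ)) (𝓝 0) := by
      have := (NNReal.tendsto_coe (f := 𝓝 (0:ℝ))).mpr h3
      simpa [coe_nnnorm] using this
    have h5 : Tendsto (fun t : ℝ => c t - 1) (𝓝 (0 : ℝ)) (𝓝 0) :=
      tendsto_zero_iff_norm_tendsto_zero.mpr h4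
    have := h5.add_const 1
    simpa using this
  have hcont : Continuous c := cont_of hc h0
  refine ⟨hcont, ?_⟩
  -- Step 2 : a coherent sequence of arccosines at dyadic scales
  set b : ℕ → ℂ := fun k => acos (c (1 / 2 ^ k)) with hbdef
  have hb : ∀ k, Complex.cos (b k) = c (1 / 2 ^ k) := fun k => cos_acos _
  have hbt : Tendsto b atTop (𝓝 0) := by
    have h1 : Tendsto (fun k : ℕ => (1 : ℝ) / 2 ^ k) atTop (𝓝 0) := by
      have := tendsto_pow_atTop_nhds_zero_of_lt_one
        (by norm_num : (0:ℝ) ≤ 1/2) (by norm_num : (1:ℝ)/2 < 1)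
      simpa [div_pow] using this
    have h2 : Tendsto (fun k : ℕ => c ((1 : ℝ) / 2 ^ k)) atTop (𝓝 1) := by
      have h3 := (hcont.tendsto 0).comp h1
      have h4 : c 0 = 1 := hc.1
      simpa [Function.comp_def, h4] using h3
    exact tendsto_acos.comp h2
  obtain ⟨K, hK⟩ : ∃ K : ℕ, ∀ k ≥ K, ‖b k‖ < 1 / 2 := by
    have h1 : ∀ᶠ k in atTop, ‖b k‖ < 1 / 2 :=
      NormedAddCommGroup.tendsto_nhds_zero.mp hbt (1 / 2) (by norm_num)
    exact eventually_atTop.mp h1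
  -- the halving relation, up to sign
  have hpm : ∀ k ≥ K, 2 * b (k + 1) = b k ∨ 2 * b (k + 1) = -b k := by
    intro k hk
    have hcc : Complex.cos (2 * b (k + 1)) = Complex.cos (b k) := by
      rw [Complex.cos_two_mul, hb (k + 1), hb k]
      have hd := ScalarCosineAux.double hc ((1 : ℝ) / 2 ^ (k + 1))
      rw [show 2 * ((1 : ℝ) / 2 ^ (k + 1)) = 1 / 2 ^ k by
        rw [pow_succ]; ring] at hd
      linear_combination -hd
    rcases Complex.cos_eq_cos_iff.mp hcc with ⟨m, hm | hm⟩
    · -- b k = 2 m π + 2 b (k+1)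
      have hm0 : m = 0 := by
        by_contra hne
        have habs : (1 : ℝ) ≤ |(m : ℝ)| := by
          have := Int.one_le_abs hne
          exact_mod_cast this
        have hnorm : ‖((2 * (m : ℝ) * Real.pi : ℝ) : ℂ)‖ < 3 / 2 := by
          have e : ((2 * (m : ℝ) * Real.pi : ℝ) : ℂ) = b k - 2 * b (k + 1) := by
            push_cast
            linear_combination -hm
          rw [e]
          have n1 : ‖b k‖ < 1 / 2 := hK k hk
          have n2 : ‖b (k + 1)‖ < 1 / 2 := hK (k + 1) (le_trans hk (Nat.le_succ k))
          calc ‖b k - 2 * b (k + 1)‖ ≤ ‖b k‖ + ‖2 * b (k + 1)‖ := norm_sub_le _ _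
            _ = ‖b k‖ + 2 * ‖b (k + 1)‖ := by rw [norm_mul]; norm_num
            _ < 3 / 2 := by linarith
        rw [Complex.norm_real, Real.norm_eq_abs] at hnorm
        have hpi := Real.pi_gt_three
        have hfin : (3 : ℝ) / 2 ≤ |2 * (m : ℝ) * Real.pi| := by
          rw [abs_mul, abs_mul, abs_two, abs_of_pos Real.pi_pos]
          nlinarith [mul_le_mul habs (le_of_lt hpi) (by norm_num : (0:ℝ) ≤ 3) (abs_nonneg ((m : ℝ)))]
        linarith
      left
      rw [hm0] at hm
      simp at hm
      linear_combination -hm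
    · have hm0 : m = 0 := by
        by_contra hne
        have habs : (1 : ℝ) ≤ |(m : ℝ)| := by
          have := Int.one_le_abs hne
          exact_mod_cast this
        have hnorm : ‖((2 * (m : ℝ) * Real.pi : ℝ) : ℂ)‖ < 3 / 2 := by
          have e : ((2 * (m : ℝ) * Real.pi : ℝ) : ℂ) = b k + 2 * b (k + 1) := by
            push_cast
            linear_combination -hm
          rw [e]
          have n1 : ‖b k‖ < 1 / 2 := hK k hk
          have n2 : ‖b (k + 1)‖ < 1 / 2 := hK (k + 1) (le_trans hk (Nat.le_succ k))
          calc ‖b k + 2 * b (k + 1)‖ ≤ ‖b k‖ + ‖2 * b (k + 1)‖ := norm_add_le _ _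
            _ = ‖b k‖ + 2 * ‖b (k + 1)‖ := by rw [norm_mul]; norm_num
            _ < 3 / 2 := by linarith
        rw [Complex.norm_real, Real.norm_eq_abs] at hnorm
        have hpi := Real.pi_gt_three
        have hfin : (3 : ℝ) / 2 ≤ |2 * (m : ℝ) * Real.pi| := by
          rw [abs_mul, abs_mul, abs_two, abs_of_pos Real.pi_pos]
          nlinarith [mul_le_mul habs (le_of_lt hpi) (by norm_num : (0:ℝ) ≤ 3) (abs_nonneg ((m : ℝ)))]
        linarith
      right
      rw [hm0] at hm
      simp at hm
      linear_combination hm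
  -- the scaled sequence is constant up to sign
  have hscale : ∀ k, K ≤ k →
      ((2 : ℂ) ^ k * b k = 2 ^ K * b K ∨ (2 : ℂ) ^ k * b k = -(2 ^ K * b K)) := by
    intro k hk
    induction k, hk using Nat.le_induction with
    | base => left; rfl
    | succ k hk ih =>
      have e : (2 : ℂ) ^ (k + 1) * b (k + 1) = (2 : ℂ) ^ k * (2 * b (k + 1)) := by ring
      rcases hpm k hk with hp | hp <;> rcases ih with hi | hi
      · left; rw [e, hp]; exact hi
      · right; rw [e, hp]; exact hi
      · right; rw [e, hp]; linear_combination -hi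
      · left; rw [e, hp]; linear_combination -hi
  set a : ℂ := (2 : ℂ) ^ K * b K with ha
  -- dyadic values
  have hdy : ∀ (n : ℤ) (k : ℕ), K ≤ k →
      c ((n : ℝ) / 2 ^ k) = Complex.cos ((((n : ℝ) / 2 ^ k : ℝ) : ℂ) * a) := by
    intro n k hk
    have h1 : c ((n : ℝ) * (1 / 2 ^ k)) = Complex.cos ((n : ℂ) * b k) :=
      ScalarCosineAux.cheb_int hc (hb k).symm n
    have h2pow : ((2 : ℂ) ^ k) ≠ 0 := pow_ne_zero _ two_ne_zero
    have hbk : b k = a / 2 ^ k ∨ b k = -(a / 2 ^ k) := by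
      rcases hscale k hk with hs | hs
      · left; rw [eq_div_iff h2pow]; linear_combination hs
      · right; rw [show -(a / 2 ^ k) = -a / 2 ^ k by ring, eq_div_iff h2pow]
        linear_combination hs
    have harg : ((((n : ℝ) * (1 / 2 ^ k) : ℝ)) : ℂ) * a = (n : ℂ) * (a / 2 ^ k) := by
      push_cast
      ring
    rw [show (n : ℝ) / 2 ^ k = (n : ℝ) * (1 / 2 ^ k) by ring, h1]
    rcases hbk with hbk | hbk <;> rw [hbk]
    · rw [harg]
    · rw [show (n : ℂ) * -(a / 2 ^ k) = -((n : ℂ) * (a / 2 ^ k)) by ring, Complex.cos_neg, harg]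
  -- Step 3 : conclude by density of dyadic rationals
  refine ⟨a, fun t => ?_⟩
  set s : ℕ → ℝ := fun m => ((⌊t * 2 ^ m⌋ : ℤ) : ℝ) / 2 ^ m with hsdef
  have hst : Tendsto s atTop (𝓝 t) := by
    have hlow : ∀ m, t - 1 / 2 ^ m ≤ s m := by
      intro m
      have h1 : t * 2 ^ m - 1 < ((⌊t * 2 ^ m⌋ : ℤ) : ℝ) := Int.sub_one_lt_floor _
      have h2 : (0 : ℝ) < 2 ^ m := by positivity
      rw [hsdef]
      dsimp only
      rw [le_div_iff₀ h2]
      have e : (t - 1 / 2 ^ m) * 2 ^ m = t * 2 ^ m - 1 := by field_simp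
      rw [e]
      linarith
    have hup : ∀ m, s m ≤ t := by
      intro m
      have h1 : ((⌊t * 2 ^ m⌋ : ℤ) : ℝ) ≤ t * 2 ^ m := Int.floor_le _
      have h2 : (0 : ℝ) < 2 ^ m := by positivity
      rw [hsdef]
      dsimp only
      rw [div_le_iff₀ h2]
      linarith
    have hl : Tendsto (fun m : ℕ => t - 1 / 2 ^ m) atTop (𝓝 t) := by
      have h1 : Tendsto (fun m : ℕ => (1 : ℝ) / 2 ^ m) atTop (𝓝 0) := by
        have := tendsto_pow_atTop_nhds_zero_of_lt_one
          (by norm_num : (0:ℝ) ≤ 1/2) (by norm_num : (1:ℝ)/2 < 1)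
        simpa [div_pow] using this
      have := tendsto_const_nhds (x := t) (f := atTop (α := ℕ)) |>.sub h1
      simpa using this
    exact tendsto_of_tendsto_of_tendsto_of_le_of_le hl tendsto_const_nhds hlow hup
  have h2 : Tendsto (fun m => c (s m)) atTop (𝓝 (c t)) := (hcont.tendsto t).comp hst
  have h3 : Tendsto (fun m => Complex.cos (((s m : ℝ) : ℂ) * a)) atTop
      (𝓝 (Complex.cos ((t : ℂ) * a))) := by
    have hcos : Continuous (fun x : ℝ => Complex.cos ((x : ℂ) * a)) := by fun_prop
    exact (hcos.tendsto t).comp hst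
  have h4 : (fun m => c (s m)) =ᶠ[atTop] fun m => Complex.cos (((s m : ℝ) : ℂ) * a) := by
    filter_upwards [eventually_ge_atTop K] with m hm
    exact hdy ⌊t * 2 ^ m⌋ m hm
  exact tendsto_nhds_unique (h2.congr' h4) h3
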